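/- Let c, h > 0 and a = g'(κ) < 0 be such that χ_κ(z) = z² − cz − 1 + a e^{−zch} has exactly three real zeros counting multiplicity, μ₃ ≤ μ₂ < 0 < μ₁. Let ψ : ℝ → ℝ be the fundamental solution of D₂y = δ(t), namely: ψ(t) = −((μ₁−μ₂)/χ_κ'(μ₁)) e^{μ₁ t} for t < 0, and for t ≥ 0, ψ is the solution of (D₂y)(t) = 0 with initial conditions y(0) = 1 − (μ₁−μ₂)/χ_κ'(μ₁) and y(s) = ψ(s) for s ∈ [−ch, 0), where (D₂y)(t) = y'(t) − (c−μ₂)y(t) − a e^{−chμ₂} ∫_{−ch}^{0} e^{−μ₂ s} y(t+s) ds. Then ψ(t) < 0 for all t ∈ ℝ, and ψ decays exponentially as t → ±∞. -/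

import Mathlib

open Filter Set Asymptotics intervalIntegral

noncomputable section

/-- The characteristic function `χ_κ(z) = z² - cz - 1 + a e^{-zch}` at the positive
equilibrium (`a = g'(κ)`). -/
def chiK (c h a z : ℝ) : ℝ := z ^ 2 - c * z - 1 + a * Real.exp (-(z * c * h))

/-- The derivative `χ_κ'(z) = 2z - c - ach e^{-zch}`. -/
def chiK' (c h a z : ℝ) : ℝ := 2 * z - c - a * c * h * Real.exp (-(z * c * h))

open MeasureTheory in
private lemma integral_exp_mul' (k A B : ℝ) (hk : k ≠ 0) :
    ∫ u in A..B, Real.exp (k*u) = (Real.exp (k*B) - Real.exp (k*A))/k := by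
  have hd : ∀ x ∈ uIcc A B, HasDerivAt (fun u => Real.exp (k*u)/k) (Real.exp (k*x)) x := by
    intro x _
    have h1 : HasDerivAt (fun u : ℝ => k*u) k x := by simpa using (hasDerivAt_id x).const_mul k
    have h2 := (h1.exp).div_const k
    have : Real.exp (k*x) * k / k = Real.exp (k*x) := by field_simp
    rwa [this] at h2
  rw [intervalIntegral.integral_eq_sub_of_hasDerivAt hd
    ((Real.continuous_exp.comp (continuous_const.mul continuous_id)).continuousOn.intervalIntegrable)]
  ring

open MeasureTheory in
private lemma eq_of_derivzero (f : ℝ → ℝ) (a b : ℝ) (hab : a ≤ b)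
    (hcont : ContinuousOn f (Icc a b)) (hder : ∀ x ∈ Ioo a b, HasDerivAt f 0 x) :
    f b = f a := by
  rcases eq_or_lt_of_le hab with rfl | h
  · rfl
  · obtain ⟨c, _, hc⟩ := exists_hasDerivAt_eq_slope f (fun _ => 0) h hcont hder
    have hc' := hc.symm
    rw [div_eq_zero_iff] at hc'
    rcases hc' with hc' | hc'
    · linarith
    · exfalso; have : b - a ≠ 0 := sub_ne_zero.2 h.ne'
      exact this hc'

set_option maxHeartbeats 2000000 in
open MeasureTheory in
/-- The fundamental solution `ψ` of `D₂y = δ(t)` is negative on all of `ℝ` and decays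
exponentially at `±∞`. Here `μ₃ ≤ μ₂ < 0 < μ₁` are the three real zeros of `χ_κ`,
`ψ(t) = -((μ₁-μ₂)/χ_κ'(μ₁)) e^{μ₁ t}` for `t < 0`, and on `[0,∞)` the function `ψ` is the
solution of `(D₂y)(t) = 0` with `y(0) = 1 - (μ₁-μ₂)/χ_κ'(μ₁)`. -/
theorem fundamental_solution_negative
    (c h a : ℝ) (hc : 0 < c) (hh : 0 < h) (ha : a < 0)
    (μ₁ μ₂ μ₃ : ℝ)
    (hord1 : μ₃ ≤ μ₂) (hord2 : μ₂ < 0) (hord3 : 0 < μ₁)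
    (hz1 : chiK c h a μ₁ = 0) (hz2 : chiK c h a μ₂ = 0) (hz3 : chiK c h a μ₃ = 0)
    (hall : ∀ x : ℝ, chiK c h a x = 0 → x = μ₁ ∨ x = μ₂ ∨ x = μ₃)
    (ψ : ℝ → ℝ)
    (hψneg : ∀ t : ℝ, t < 0 → ψ t = -((μ₁ - μ₂) / chiK' c h a μ₁) * Real.exp (μ₁ * t))
    (hψ0 : ψ 0 = 1 - (μ₁ - μ₂) / chiK' c h a μ₁)
    (hψcont : ContinuousOn ψ (Ici 0))
    (hψdiff : ∀ t : ℝ, 0 < t → DifferentiableAt ℝ ψ t)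
    (hψeq : ∀ t : ℝ, 0 < t →
      deriv ψ t - (c - μ₂) * ψ t -
        a * Real.exp (-(c * h * μ₂)) *
          (∫ s in (-(c * h))..(0 : ℝ), Real.exp (-(μ₂ * s)) * ψ (t + s)) = 0) :
    (∀ t : ℝ, ψ t < 0) ∧
    ∃ α : ℝ, 0 < α ∧
      (ψ =O[atTop] fun t => Real.exp (-(α * t))) ∧
      (ψ =O[atBot] fun t => Real.exp (α * t)) := by
  have hqpos : 0 < c * h := mul_pos hc hh
  -- clean root identities
  have root1 : μ₁^2 - c*μ₁ - 1 + a * Real.exp (-(μ₁*(c*h))) = 0 := by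
    have h' := hz1; simp only [chiK] at h'
    rwa [show -(μ₁ * c * h) = -(μ₁*(c*h)) by ring] at h'
  have root2 : μ₂^2 - c*μ₂ - 1 + a * Real.exp (-(μ₂*(c*h))) = 0 := by
    have h' := hz2; simp only [chiK] at h'
    rwa [show -(μ₂ * c * h) = -(μ₂*(c*h)) by ring] at h'
  have rootK' : chiK' c h a μ₁ = 2*μ₁ - c - a*(c*h)*Real.exp (-(μ₁*(c*h))) := by
    simp only [chiK']
    rw [show -(μ₁ * c * h) = -(μ₁*(c*h)) by ring]; ring
  set q : ℝ := c * h with hqdef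
  set L : ℝ := μ₁ - μ₂ with hLdef
  have hL : 0 < L := by rw [hLdef]; linarith
  set X : ℝ := Real.exp (-(μ₁*q)) with hXdef
  set Y : ℝ := Real.exp (-(μ₂*q)) with hYdef
  have hX : 0 < X := Real.exp_pos _
  have hY : 0 < Y := Real.exp_pos _
  have hYX : Y = X * Real.exp (L*q) := by
    rw [hXdef, hYdef, ← Real.exp_add]; congr 1; rw [hLdef]; ring
  have key1 : a * (Y - X) = L * (μ₁ + μ₂ - c) := by
    rw [hLdef]; linear_combination root2 - root1
  have haX : a*X < 0 := mul_neg_of_neg_of_pos ha hX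
  have hmu1c : c < μ₁ := by nlinarith [root1, haX, hord3]
  have hK'pos : 0 < chiK' c h a μ₁ := by
    rw [rootK']
    have h1 : a*q*X < 0 := by nlinarith [haX, hqpos]
    linarith
  have hexpgt : L*q + 1 < Real.exp (L*q) := Real.add_one_lt_exp (by positivity)
  have hK'lt : chiK' c h a μ₁ < L := by
    have e1 : L * (μ₁ + μ₂ - c) = a*X*(Real.exp (L*q) - 1) := by
      rw [← key1, hYX]; ring
    have e2 : a*X*(Real.exp (L*q) - 1 - L*q) < 0 :=
      mul_neg_of_neg_of_pos haX (by linarith)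
    have e3 : L * (chiK' c h a μ₁ - L) < 0 := by
      rw [rootK']
      have : L * (2*μ₁ - c - a*(c*h)*X - L) = L*(μ₁+μ₂-c) - (a*X)*(L*(c*h)) := by
        rw [hLdef]; ring
      rw [this]
      have hqq : (c*h) = q := rfl
      rw [hqq, e1]
      nlinarith [e2]
    nlinarith [e3, hL]
  set A : ℝ := L / chiK' c h a μ₁ with hAdef
  have hA1 : 1 < A := (one_lt_div hK'pos).2 hK'lt
  have hA0 : 0 < A := lt_trans one_pos hA1
  -- negativity and bound on (-∞, 0]
  have hψle0 : ∀ t : ℝ, t ≤ 0 → ψ t < 0 := by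
    intro t ht
    rcases lt_or_eq_of_le ht with h' | h'
    · rw [hψneg t h']
      exact mul_neg_of_neg_of_pos (neg_lt_zero.2 hA0) (Real.exp_pos _)
    · rw [h', hψ0]; linarith
  have hbnd0 : ∀ t : ℝ, -q ≤ t → t ≤ 0 → |ψ t| ≤ A := by
    intro t _ h2
    rcases lt_or_eq_of_le h2 with h' | h'
    · have hneg2 : -A * Real.exp (μ₁*t) < 0 :=
        mul_neg_of_neg_of_pos (neg_lt_zero.2 hA0) (Real.exp_pos _)
      rw [hψneg t h', abs_of_neg hneg2]
      have he : Real.exp (μ₁*t) ≤ 1 := by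
        rw [Real.exp_le_one_iff]
        exact mul_nonpos_iff.2 (Or.inl ⟨hord3.le, h'.le⟩)
      have hml : A * Real.exp (μ₁*t) ≤ A * 1 := mul_le_mul_of_nonneg_left he hA0.le
      rw [neg_mul, neg_neg]
      linarith
    · rw [h', hψ0, abs_of_neg (by linarith)]; linarith
  -- pointwise continuity away from 0
  have hcontneg : ∀ x : ℝ, x < 0 → ContinuousAt ψ x := by
    intro x hx
    have hg : ContinuousAt (fun t => -A * Real.exp (μ₁ * t)) x :=
      (continuous_const.mul (Real.continuous_exp.comp (continuous_const.mul continuous_id))).continuousAt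
    apply hg.congr
    filter_upwards [Iio_mem_nhds hx] with t ht
    exact (hψneg t ht).symm
  have hcontpos : ∀ x : ℝ, 0 < x → ContinuousAt ψ x := fun x hx =>
    hψcont.continuousAt (Ici_mem_nhds hx)
  have hcontne : ∀ x : ℝ, x ≠ 0 → ContinuousAt ψ x := by
    intro x hx
    rcases hx.lt_or_gt with h' | h'
    · exact hcontneg x h'
    · exact hcontpos x h'
  -- measurability
  have hmeas : AEStronglyMeasurable ψ (volume : Measure ℝ) := by
    have hmeasL : AEStronglyMeasurable ψ (volume.restrict (Iio (0:ℝ))) := by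
      have hg : AEStronglyMeasurable (fun t => -A * Real.exp (μ₁ * t))
          (volume.restrict (Iio (0:ℝ))) :=
        (continuous_const.mul
          (Real.continuous_exp.comp (continuous_const.mul continuous_id))).aestronglyMeasurable
      apply hg.congr
      rw [Filter.EventuallyEq, ae_restrict_iff' measurableSet_Iio]
      exact Filter.Eventually.of_forall (fun t ht => (hψneg t ht).symm)
    have hmeasR : AEStronglyMeasurable ψ (volume.restrict (Ici (0:ℝ))) :=
      hψcont.aestronglyMeasurable measurableSet_Ici
    have hsplit : (volume : Measure ℝ) = volume.restrict (Iio 0) + volume.restrict (Ici 0) := by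
      rw [← Measure.restrict_union (by simp [disjoint_left]) measurableSet_Ici,
        Iio_union_Ici, Measure.restrict_univ]
    rw [hsplit]
    exact hmeasL.add_measure hmeasR
  -- interval integrability
  have hIIψ : ∀ x y : ℝ, IntervalIntegrable ψ volume x y := by
    have hI0 : ∀ x : ℝ, IntervalIntegrable ψ volume x 0 := by
      intro x
      rcases le_or_gt x 0 with hx | hx
      · have hg : IntervalIntegrable (fun t => -A * Real.exp (μ₁ * t)) volume x 0 :=
          Continuous.intervalIntegrable
            (continuous_const.mul (Real.continuous_exp.comp (continuous_const.mul continuous_id))) x 0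
        rw [intervalIntegrable_iff] at hg ⊢
        apply hg.congr
        rw [Filter.EventuallyEq, ae_iff]
        rw [Measure.restrict_apply' measurableSet_uIoc]
        refine measure_mono_null (?_ : _ ⊆ ({0} : Set ℝ)) (measure_singleton 0)
        rintro t ⟨ht1, ht2⟩
        simp only [mem_setOf_eq] at ht1
        rw [Set.uIoc_of_le hx] at ht2
        by_contra h0
        have htneg : t < 0 := lt_of_le_of_ne ht2.2 h0
        exact ht1 (hψneg t htneg).symm
      · apply ContinuousOn.intervalIntegrable
        apply hψcont.mono
        rw [Set.uIcc_of_ge hx.le]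
        intro u hu
        exact hu.1
    intro x y
    exact (hI0 x).trans ((hI0 y).symm)
  have hII : ∀ (k x y : ℝ), IntervalIntegrable (fun u => Real.exp (k*u) * ψ u) volume x y := by
    intro k x y
    exact (hIIψ x y).continuousOn_mul
      ((Real.continuous_exp.comp (continuous_const.mul continuous_id)).continuousOn)
  -- the primitives
  set Φ : ℝ → ℝ → ℝ := fun k x => ∫ u in (0:ℝ)..x, Real.exp (k*u) * ψ u with hΦdef
  have hΦcont : ∀ k, Continuous (Φ k) := fun k =>
    intervalIntegral.continuous_primitive (hII k) 0
  have hΦd : ∀ (k x : ℝ), x ≠ 0 → HasDerivAt (Φ k) (Real.exp (k*x) * ψ x) x := by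
    intro k x hx
    refine intervalIntegral.integral_hasDerivAt_right (hII k 0 x) ⟨univ, univ_mem, ?_⟩ ?_
    · rw [Measure.restrict_univ]
      exact ((Real.continuous_exp.comp
        (continuous_const.mul continuous_id)).aestronglyMeasurable).mul hmeas
    · exact ((Real.continuous_exp.comp
        (continuous_const.mul continuous_id)).continuousAt).mul (hcontne x hx)
  -- shift lemma
  have hshift : ∀ (k t : ℝ), (∫ s in (-q)..(0:ℝ), Real.exp (k*s) * ψ (t+s))
      = Real.exp (-(k*t)) * (Φ k t - Φ k (t-q)) := by
    intro k t
    have h1 : (∫ s in (-q)..(0:ℝ), Real.exp (k*s) * ψ (t+s))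
        = ∫ s in (-q)..(0:ℝ), Real.exp (-(k*t)) * ((fun u => Real.exp (k*u) * ψ u) (s+t)) := by
      apply intervalIntegral.integral_congr
      intro s _
      simp only
      rw [add_comm t s, ← mul_assoc, ← Real.exp_add]
      congr 2
      ring
    rw [h1, intervalIntegral.integral_const_mul,
      intervalIntegral.integral_comp_add_right (fun u => Real.exp (k*u) * ψ u) t,
      show -q + t = t - q by ring, zero_add]
    congr 1
    exact (intervalIntegral.integral_interval_sub_left (hII k 0 t) (hII k 0 (t-q))).symm
  -- coefficients
  set B₁ : ℝ := a*Y/L with hB₁def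
  set B₂ : ℝ := -(a*X)/L with hB₂def
  have hQ1 : X * Real.exp (μ₁*q) = 1 := by
    rw [hXdef, ← Real.exp_add, show -(μ₁*q) + μ₁*q = 0 by ring, Real.exp_zero]
  have hQ2 : Y * Real.exp (μ₂*q) = 1 := by
    rw [hYdef, ← Real.exp_add, show -(μ₂*q) + μ₂*q = 0 by ring, Real.exp_zero]
  have hB₁L : B₁ * L = a*Y := by
    rw [hB₁def]; field_simp
  have hBsum : B₁ + B₂ = μ₁ + μ₂ - c := by
    have e1 : B₁ + B₂ = (a*(Y-X))/L := by rw [hB₁def, hB₂def]; ring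
    rw [e1, key1]; field_simp
  have hBQ : B₁ * Real.exp (μ₂*q) + B₂ * Real.exp (μ₁*q) = 0 := by
    have e1 : B₁ * Real.exp (μ₂*q) + B₂ * Real.exp (μ₁*q)
        = (a/L) * (Y*Real.exp (μ₂*q)) - (a/L) * (X*Real.exp (μ₁*q)) := by
      rw [hB₁def, hB₂def]; ring
    rw [e1, hQ1, hQ2]; ring
  -- the conserved functional
  set F : ℝ → ℝ := fun t => Real.exp (-(μ₁*t)) * ψ t
    + B₁ * (Real.exp ((μ₂-μ₁)*t) * (Φ (-μ₂) t - Φ (-μ₂) (t-q)))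
    + B₂ * (Φ (-μ₁) t - Φ (-μ₁) (t-q)) with hFdef
  -- rewrite the delay equation
  have hI2 : ∀ t : ℝ, (∫ s in (-q)..(0:ℝ), Real.exp (-(μ₂ * s)) * ψ (t + s))
      = Real.exp (μ₂*t) * (Φ (-μ₂) t - Φ (-μ₂) (t-q)) := by
    intro t
    have h' := hshift (-μ₂) t
    simp only [neg_mul, neg_neg] at h'
    exact h'
  have hderiv : ∀ t : ℝ, 0 < t → deriv ψ t = (c-μ₂)*ψ t
      + a*Y*(Real.exp (μ₂*t) * (Φ (-μ₂) t - Φ (-μ₂) (t-q))) := by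
    intro t ht
    have h' := hψeq t ht
    rw [hI2 t] at h'
    have hYe : Real.exp (-(q*μ₂)) = Y := by rw [hYdef]; congr 1; ring
    rw [hYe] at h'
    linarith
  -- zero derivative of F away from 0 and q
  have hFder : ∀ t : ℝ, 0 < t → t ≠ q → HasDerivAt F 0 t := by
    intro t ht hne
    have htq : t - q ≠ 0 := sub_ne_zero.2 hne
    have d1 : HasDerivAt (fun u : ℝ => Real.exp (-(μ₁*u))) (-μ₁ * Real.exp (-(μ₁*t))) t := by
      have hlin : HasDerivAt (fun u : ℝ => -(μ₁*u)) (-μ₁) t := by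
        simpa using ((hasDerivAt_id t).const_mul (-μ₁))
      simpa [mul_comm] using hlin.exp
    have dψ : HasDerivAt ψ (deriv ψ t) t := (hψdiff t ht).hasDerivAt
    have dΦ2t : HasDerivAt (Φ (-μ₂)) (Real.exp (-μ₂*t) * ψ t) t := hΦd _ _ (ne_of_gt ht)
    have dΦ2q : HasDerivAt (fun u => Φ (-μ₂) (u - q)) (Real.exp (-μ₂*(t-q)) * ψ (t-q)) t := by
      have hcomp := (hΦd (-μ₂) (t-q) htq).comp t ((hasDerivAt_id t).sub_const q)
      rw [mul_one] at hcomp; exact hcomp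
    have dΦ1t : HasDerivAt (Φ (-μ₁)) (Real.exp (-μ₁*t) * ψ t) t := hΦd _ _ (ne_of_gt ht)
    have dΦ1q : HasDerivAt (fun u => Φ (-μ₁) (u - q)) (Real.exp (-μ₁*(t-q)) * ψ (t-q)) t := by
      have hcomp := (hΦd (-μ₁) (t-q) htq).comp t ((hasDerivAt_id t).sub_const q)
      rw [mul_one] at hcomp; exact hcomp
    have dE2 : HasDerivAt (fun u : ℝ => Real.exp ((μ₂-μ₁)*u)) ((μ₂-μ₁)*Real.exp ((μ₂-μ₁)*t)) t := by
      have hlin : HasDerivAt (fun u : ℝ => (μ₂-μ₁)*u) (μ₂-μ₁) t := by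
        simpa using ((hasDerivAt_id t).const_mul (μ₂-μ₁))
      simpa [mul_comm] using hlin.exp
    have big := ((d1.mul dψ).add
        ((dE2.mul (dΦ2t.sub dΦ2q)).const_mul B₁)).add
        ((dΦ1t.sub dΦ1q).const_mul B₂)
    rw [hFdef]
    refine big.congr_deriv (Eq.symm ?_)
    rw [hderiv t ht]
    simp only [neg_mul, Pi.sub_apply]
    rw [show Real.exp ((μ₂-μ₁)*t) = Real.exp (μ₂*t) * Real.exp (-(μ₁*t)) by
      rw [← Real.exp_add]; congr 1; ring]
    rw [show Real.exp (-(μ₂*(t-q))) = Real.exp (-(μ₂*t)) * Real.exp (μ₂*q) by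
      rw [← Real.exp_add]; congr 1; ring]
    rw [show Real.exp (-(μ₁*(t-q))) = Real.exp (-(μ₁*t)) * Real.exp (μ₁*q) by
      rw [← Real.exp_add]; congr 1; ring]
    have hP2N2 : Real.exp (μ₂*t) * Real.exp (-(μ₂*t)) = 1 := by
      rw [← Real.exp_add, show μ₂*t + -(μ₂*t) = 0 by ring, Real.exp_zero]
    linear_combination
      (-(Real.exp (-(μ₁*t)) * ψ t)) * hBsum
      + (Real.exp (-(μ₁*t)) * ψ (t-q)) * hBQ
      + (Real.exp (μ₂*t) * Real.exp (-(μ₁*t)) * (Φ (-μ₂) t - Φ (-μ₂) (t-q))) * hB₁L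
      + (-(Real.exp (μ₂*t) * Real.exp (-(μ₁*t)) * (Φ (-μ₂) t - Φ (-μ₂) (t-q)) * B₁)) * hLdef
      + (-(B₁ * Real.exp (-(μ₁*t)) * (ψ t - ψ (t-q) * Real.exp (μ₂*q)))) * hP2N2
  have hzeroΦ : ∀ k : ℝ, Φ k 0 = 0 := by
    intro k; rw [hΦdef]; exact intervalIntegral.integral_same
  have hae0 : ∀ᵐ (u:ℝ) ∂(volume : Measure ℝ), u ≠ (0:ℝ) := by
    rw [ae_iff]
    have : {u : ℝ | ¬ u ≠ 0} = {0} := by ext u; simp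
    rw [this]; exact measure_singleton 0
  have hint2 : Φ (-μ₂) (-q) = A * (1 - Real.exp (-(L*q)))/L := by
    show (∫ u in (0:ℝ)..(-q), Real.exp (-μ₂*u) * ψ u) = A * (1 - Real.exp (-(L*q)))/L
    have hcongr : (∫ u in (0:ℝ)..(-q), Real.exp (-μ₂*u) * ψ u)
        = ∫ u in (0:ℝ)..(-q), -A * Real.exp (L*u) := by
      apply intervalIntegral.integral_congr_ae
      filter_upwards [hae0] with u hu hmem
      rcases Set.mem_uIoc.1 hmem with h' | h'
      · exfalso; linarith [h'.1, h'.2]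
      · have hlt : u < 0 := lt_of_le_of_ne h'.2 hu
        have hexp : Real.exp (-μ₂*u) * Real.exp (μ₁*u) = Real.exp (L*u) := by
          rw [← Real.exp_add]; congr 1; rw [hLdef]; ring
        rw [hψneg u hlt]
        linear_combination (-A : ℝ) * hexp
    rw [hcongr, intervalIntegral.integral_const_mul, integral_exp_mul' L 0 (-q) hL.ne',
      show L*(-q) = -(L*q) by ring, show L*(0:ℝ) = 0 by ring, Real.exp_zero]
    ring
  have hint1 : Φ (-μ₁) (-q) = A * q := by
    show (∫ u in (0:ℝ)..(-q), Real.exp (-μ₁*u) * ψ u) = A * q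
    have hcongr : (∫ u in (0:ℝ)..(-q), Real.exp (-μ₁*u) * ψ u)
        = ∫ u in (0:ℝ)..(-q), (-A : ℝ) := by
      apply intervalIntegral.integral_congr_ae
      filter_upwards [hae0] with u hu hmem
      rcases Set.mem_uIoc.1 hmem with h' | h'
      · exfalso; linarith [h'.1, h'.2]
      · have hlt : u < 0 := lt_of_le_of_ne h'.2 hu
        have hexp : Real.exp (-μ₁*u) * Real.exp (μ₁*u) = 1 := by
          rw [← Real.exp_add, show -μ₁*u + μ₁*u = 0 by ring, Real.exp_zero]
        rw [hψneg u hlt]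
        linear_combination (-A : ℝ) * hexp
    rw [hcongr, intervalIntegral.integral_const]
    simp; ring
  have hF0 : F 0 = 0 := by
    rw [hFdef]
    simp only
    rw [show (0:ℝ) - q = -q by ring, hint1, hint2, hzeroΦ, hzeroΦ, hψ0]
    rw [show -(μ₁*(0:ℝ)) = 0 by ring, show (μ₂-μ₁)*(0:ℝ) = 0 by ring, Real.exp_zero]
    -- now a pure scalar identity
    have hAK : A * chiK' c h a μ₁ = L := by
      rw [hAdef]; field_simp
    have hYE : Y * Real.exp (-(L*q)) = X := by
      rw [hYX, mul_assoc, ← Real.exp_add, show L*q + -(L*q) = 0 by ring, Real.exp_zero, mul_one]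
    have hKval : chiK' c h a μ₁ = 2*μ₁ - c - a*q*X := rootK'
    have hB₂L : B₂ * L = -(a*X) := by rw [hB₂def]; field_simp
    have hmul2 : ((1 - A) * L + -(B₁ * (A * (1 - Real.exp (-(L * q))))) + -(B₂ * (A * q) * L)) * L = 0 := by
      linear_combination
        (-(A*(1 - Real.exp (-(L*q))))) * hB₁L
        + (-(A*q*L)) * hB₂L
        + (A*a) * hYE
        + (-L) * hAK
        + (A*L) * hKval
        + (-(A*L)) * hLdef
        + (-A) * key1
    field_simp
    rcases mul_eq_zero.1 hmul2 with h' | h'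
    · linarith
    · exact absurd h' hL.ne'
  have hexpcont : ∀ k : ℝ, Continuous (fun u : ℝ => Real.exp (k*u)) :=
    fun k => Real.continuous_exp.comp (continuous_const.mul continuous_id)
  have hFcont : ContinuousOn F (Ici 0) := by
    rw [hFdef]
    apply ContinuousOn.add
    apply ContinuousOn.add
    · exact ((Real.continuous_exp.comp ((continuous_const.mul continuous_id).neg)).continuousOn).mul hψcont
    · exact (continuous_const.mul (((hexpcont (μ₂-μ₁))).mul
        ((hΦcont (-μ₂)).sub ((hΦcont (-μ₂)).comp (continuous_id.sub continuous_const))))).continuousOn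
    · exact (continuous_const.mul
        ((hΦcont (-μ₁)).sub ((hΦcont (-μ₁)).comp (continuous_id.sub continuous_const)))).continuousOn
  have hFzero : ∀ t : ℝ, 0 ≤ t → F t = 0 := by
    have hfq : F q = 0 := by
      rw [← hF0]
      exact eq_of_derivzero F 0 q hqpos.le (hFcont.mono (fun x hx => hx.1))
        (fun x hx => hFder x hx.1 (ne_of_lt hx.2))
    intro t ht
    rcases le_or_gt t q with h' | h'
    · rw [← hF0]
      exact eq_of_derivzero F 0 t ht (hFcont.mono (fun x hx => hx.1))
        (fun x hx => hFder x hx.1 (ne_of_lt (lt_of_lt_of_le hx.2 h')))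
    · rw [← hfq]
      exact eq_of_derivzero F q t h'.le (hFcont.mono (fun x hx => le_trans hqpos.le hx.1))
        (fun x hx => hFder x (lt_trans hqpos hx.1) (ne_of_gt hx.1))
  -- the kernel
  set Gk : ℝ → ℝ := fun r => (-a/L) * (Real.exp (-(μ₂*(q+r))) - Real.exp (-(μ₁*(q+r)))) with hGdef
  have hGnn : ∀ r : ℝ, -q ≤ r → 0 ≤ Gk r := by
    intro r hr
    rw [hGdef]
    apply mul_nonneg (le_of_lt (div_pos (neg_pos.2 ha) hL))
    rw [sub_nonneg, Real.exp_le_exp]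
    nlinarith [hr]
  have hGpos : ∀ r : ℝ, -q < r → 0 < Gk r := by
    intro r hr
    rw [hGdef]
    apply mul_pos (div_pos (neg_pos.2 ha) hL)
    rw [sub_pos, Real.exp_lt_exp]
    nlinarith [hr]
  have hGcont : Continuous Gk := by
    rw [hGdef]
    exact continuous_const.mul
      ((Real.continuous_exp.comp (by continuity)).sub (Real.continuous_exp.comp (by continuity)))
  have hIIshift : ∀ t : ℝ, IntervalIntegrable (fun s => ψ (t + s)) volume (-q) 0 := by
    intro t
    have h1 := (hIIψ (-q + t) (0 + t)).comp_add_right t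
    have h2 : IntervalIntegrable (fun x => ψ (x + t)) volume (-q) 0 := by
      simpa using h1
    have e : (fun x : ℝ => ψ (x + t)) = (fun x : ℝ => ψ (t + x)) := funext fun x => by rw [add_comm]
    rwa [e] at h2
  have hIIexpshift : ∀ (k t : ℝ), IntervalIntegrable (fun s => Real.exp (k*s) * ψ (t + s)) volume (-q) 0 :=
    fun k t => (hIIshift t).continuousOn_mul (hexpcont k).continuousOn
  have hIIker : ∀ t : ℝ, IntervalIntegrable (fun r => Gk r * ψ (t + r)) volume (-q) 0 :=
    fun t => (hIIshift t).continuousOn_mul hGcont.continuousOn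
  have hker : ∀ t : ℝ, 0 ≤ t → ψ t = ∫ r in (-q)..(0:ℝ), Gk r * ψ (t+r) := by
    intro t ht
    have h0 := hFzero t ht
    rw [hFdef] at h0
    simp only at h0
    have hI1 : (∫ s in (-q)..(0:ℝ), Real.exp (-(μ₁ * s)) * ψ (t + s))
        = Real.exp (μ₁*t) * (Φ (-μ₁) t - Φ (-μ₁) (t-q)) := by
      have h' := hshift (-μ₁) t
      simp only [neg_mul, neg_neg] at h'
      exact h'
    have hmulP : Real.exp (μ₁*t) * Real.exp (-(μ₁*t)) = 1 := by
      rw [← Real.exp_add, show μ₁*t + -(μ₁*t) = 0 by ring, Real.exp_zero]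
    have he2 : Real.exp ((μ₂-μ₁)*t) = Real.exp (μ₂*t) * Real.exp (-(μ₁*t)) := by
      rw [← Real.exp_add]; congr 1; ring
    rw [he2] at h0
    have hpsit : ψ t = -B₁ * (∫ s in (-q)..(0:ℝ), Real.exp (-(μ₂ * s)) * ψ (t + s))
        - B₂ * (∫ s in (-q)..(0:ℝ), Real.exp (-(μ₁ * s)) * ψ (t + s)) := by
      rw [hI2 t, hI1]
      linear_combination (Real.exp (μ₁*t)) * h0
        - (ψ t + B₁ * Real.exp (μ₂*t) * (Φ (-μ₂) t - Φ (-μ₂) (t-q))) * hmulP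
    have hIIe2 : IntervalIntegrable (fun s => Real.exp (-(μ₂*s)) * ψ (t+s)) volume (-q) 0 := by
      have h'' := hIIexpshift (-μ₂) t
      simpa [neg_mul] using h''
    have hIIe1 : IntervalIntegrable (fun s => Real.exp (-(μ₁*s)) * ψ (t+s)) volume (-q) 0 := by
      have h'' := hIIexpshift (-μ₁) t
      simpa [neg_mul] using h''
    have hcomb : (∫ r in (-q)..(0:ℝ), Gk r * ψ (t+r))
        = -B₁ * (∫ s in (-q)..(0:ℝ), Real.exp (-(μ₂ * s)) * ψ (t + s))
          - B₂ * (∫ s in (-q)..(0:ℝ), Real.exp (-(μ₁ * s)) * ψ (t + s)) := by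
      rw [← intervalIntegral.integral_const_mul, ← intervalIntegral.integral_const_mul,
        ← intervalIntegral.integral_sub (hIIe2.const_mul _) (hIIe1.const_mul _)]
      apply intervalIntegral.integral_congr
      intro r _
      show ((-a/L) * (Real.exp (-(μ₂*(q+r))) - Real.exp (-(μ₁*(q+r))))) * ψ (t+r)
        = -B₁ * (Real.exp (-(μ₂ * r)) * ψ (t + r)) - B₂ * (Real.exp (-(μ₁ * r)) * ψ (t + r))
      have e1 : Real.exp (-(μ₂*(q+r))) = Y * Real.exp (-(μ₂*r)) := by
        rw [hYdef, ← Real.exp_add]; congr 1; ring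
      have e2 : Real.exp (-(μ₁*(q+r))) = X * Real.exp (-(μ₁*r)) := by
        rw [hXdef, ← Real.exp_add]; congr 1; ring
      rw [e1, e2, hB₁def, hB₂def]
      field_simp
      ring
    rw [hpsit]
    exact hcomb.symm
  -- negativity everywhere
  have hnegall : ∀ t : ℝ, ψ t < 0 := by
    intro t
    rcases le_or_gt t 0 with ht | ht
    · exact hψle0 t ht
    · by_contra hcon
      push_neg at hcon
      have hSne : Set.Nonempty {s : ℝ | 0 ≤ s ∧ 0 ≤ ψ s} := ⟨t, ht.le, hcon⟩
      have hSclosed : IsClosed {s : ℝ | 0 ≤ s ∧ 0 ≤ ψ s} := by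
        have heq : {s : ℝ | 0 ≤ s ∧ 0 ≤ ψ s} = Ici 0 ∩ ψ ⁻¹' (Ici 0) := by
          ext s; simp [mem_setOf_eq, mem_Ici]
        rw [heq]
        exact hψcont.preimage_isClosed_of_isClosed isClosed_Ici isClosed_Ici
      have hSbdd : BddBelow {s : ℝ | 0 ≤ s ∧ 0 ≤ ψ s} := ⟨0, fun s hs => hs.1⟩
      set t₀ := sInf {s : ℝ | 0 ≤ s ∧ 0 ≤ ψ s} with ht₀def
      have ht₀S : t₀ ∈ {s : ℝ | 0 ≤ s ∧ 0 ≤ ψ s} := hSclosed.csInf_mem hSne hSbdd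
      have ht₀pos : 0 < t₀ := by
        rcases lt_or_eq_of_le ht₀S.1 with h' | h'
        · exact h'
        · exfalso
          have h2 := ht₀S.2
          rw [← h'] at h2
          linarith [hψle0 0 le_rfl]
      have hmin : ∀ s : ℝ, s < t₀ → ψ s < 0 := by
        intro s hs
        rcases le_or_gt s 0 with h' | h'
        · exact hψle0 s h'
        · by_contra h''
          push_neg at h''
          have : t₀ ≤ s := csInf_le hSbdd ⟨h'.le, h''⟩
          linarith
      have hid := hker t₀ ht₀pos.le
      have hpos2 : 0 < ∫ r in (-q)..(0:ℝ), -(Gk r * ψ (t₀ + r)) := by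
        apply intervalIntegral.intervalIntegral_pos_of_pos_on ((hIIker t₀).neg)
        · intro r hr
          have h1 : 0 < Gk r := hGpos r hr.1
          have h2 : ψ (t₀ + r) < 0 := hmin _ (by linarith [hr.2])
          have h3 := mul_pos h1 (neg_pos.2 h2)
          have h4 : Gk r * -ψ (t₀+r) = -(Gk r * ψ (t₀+r)) := by ring
          show (0:ℝ) < -(Gk r * ψ (t₀ + r))
          linarith [h3, h4]
        · linarith [hqpos]
      rw [intervalIntegral.integral_neg, ← hid] at hpos2
      linarith [ht₀S.2]
  -- the contraction factor
  set ρ : ℝ := ∫ r in (-q)..(0:ℝ), Gk r with hρdef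
  have hρpos : 0 < ρ := by
    rw [hρdef]
    apply intervalIntegral.intervalIntegral_pos_of_pos_on (hGcont.intervalIntegrable _ _)
      (fun r hr => hGpos r hr.1)
    linarith [hqpos]
  have hρval : ρ = 1 + (1-a)/(μ₁*μ₂) := by
    rw [hρdef]
    have hGsplit : ∀ r : ℝ, Gk r
        = ((-a/L)*Y) * Real.exp (-μ₂*r) - ((-a/L)*X) * Real.exp (-μ₁*r) := by
      intro r
      show ((-a/L) * (Real.exp (-(μ₂*(q+r))) - Real.exp (-(μ₁*(q+r))))) = _
      have e1 : Real.exp (-(μ₂*(q+r))) = Y * Real.exp (-μ₂*r) := by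
        rw [hYdef, ← Real.exp_add]; congr 1; ring
      have e2 : Real.exp (-(μ₁*(q+r))) = X * Real.exp (-μ₁*r) := by
        rw [hXdef, ← Real.exp_add]; congr 1; ring
      rw [e1, e2]; ring
    rw [intervalIntegral.integral_congr (fun r _ => hGsplit r)]
    rw [intervalIntegral.integral_sub
        (((hexpcont (-μ₂)).intervalIntegrable _ _).const_mul _)
        (((hexpcont (-μ₁)).intervalIntegrable _ _).const_mul _),
      intervalIntegral.integral_const_mul, intervalIntegral.integral_const_mul,
      integral_exp_mul' (-μ₂) _ _ (neg_ne_zero.2 hord2.ne),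
      integral_exp_mul' (-μ₁) _ _ (neg_ne_zero.2 hord3.ne')]
    rw [show -μ₂*(0:ℝ) = 0 by ring, show -μ₁*(0:ℝ) = 0 by ring, Real.exp_zero,
      show -μ₂*(-q) = μ₂*q by ring, show -μ₁*(-q) = μ₁*q by ring]
    have hid2 : a*(Y-1)*μ₁ - a*(X-1)*μ₂ = L*(μ₁*μ₂) + L*(1-a) := by
      linear_combination μ₁ * root2 - μ₂ * root1 - (μ₁*μ₂+1-a) * hLdef
    field_simp [hL.ne', hord2.ne, hord3.ne']
    rw [mul_comm q μ₁]
    linear_combination hid2 + (-(a*μ₁)) * hQ2 + (a*μ₂) * hQ1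
  have hρ1 : ρ < 1 := by
    rw [hρval]
    have hmm : μ₁*μ₂ < 0 := mul_neg_of_pos_of_neg hord3 hord2
    have h6 : (1-a)/(μ₁*μ₂) < 0 := div_neg_of_pos_of_neg (by linarith) hmm
    linarith
  have hlogneg : Real.log ρ < 0 := Real.log_neg hρpos hρ1
  -- windowed contraction
  have hbound : ∀ n : ℕ, ∀ t : ℝ, ((n:ℝ)*q - q ≤ t) → (t ≤ (n:ℝ)*q) → |ψ t| ≤ A * ρ^n := by
    intro n
    induction n with
    | zero =>
      intro t h1 h2
      have h1' : -q ≤ t := by push_cast at h1; linarith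
      have h2' : t ≤ 0 := by push_cast at h2; linarith
      simpa using hbnd0 t h1' h2'
    | succ n ih =>
      have hnq0 : (0:ℝ) ≤ (n:ℝ)*q := mul_nonneg (Nat.cast_nonneg n) hqpos.le
      have hsub : Icc ((n:ℝ)*q) ((n:ℝ)*q + q) ⊆ Ici (0:ℝ) :=
        fun x hx => le_trans hnq0 hx.1
      obtain ⟨τ, hτI, hτmax⟩ := isCompact_Icc.exists_isMaxOn
        (nonempty_Icc.2 (by linarith : (n:ℝ)*q ≤ (n:ℝ)*q + q))
        ((hψcont.mono hsub).abs)
      have hτ0 : 0 ≤ τ := le_trans hnq0 hτI.1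
      have hidτ := hker τ hτ0
      have hSb : |ψ τ| ≤ ρ * max (A * ρ^n) |ψ τ| := by
        calc |ψ τ| = |∫ r in (-q)..(0:ℝ), Gk r * ψ (τ+r)| := by rw [← hidτ]
        _ ≤ ∫ r in (-q)..(0:ℝ), |Gk r * ψ (τ+r)| :=
            intervalIntegral.abs_integral_le_integral_abs (by linarith [hqpos])
        _ ≤ ∫ r in (-q)..(0:ℝ), Gk r * max (A * ρ^n) |ψ τ| := by
            apply intervalIntegral.integral_mono_on (by linarith [hqpos])
              ((hIIker τ).abs) ((hGcont.intervalIntegrable _ _).mul_const _)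
            intro r hr
            rw [abs_mul, abs_of_nonneg (hGnn r hr.1)]
            apply mul_le_mul_of_nonneg_left ?_ (hGnn r hr.1)
            rcases le_or_gt (τ + r) ((n:ℝ)*q) with h' | h'
            · refine le_max_iff.2 (Or.inl (ih (τ+r) ?_ h'))
              have := hτI.1
              have := hr.1
              linarith
            · refine le_max_iff.2 (Or.inr ?_)
              exact isMaxOn_iff.1 hτmax (τ+r) ⟨h'.le, by linarith [hr.2, hτI.2]⟩
        _ = ρ * max (A * ρ^n) |ψ τ| := by
            rw [intervalIntegral.integral_mul_const, ← hρdef, mul_comm]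
      have hSfin : |ψ τ| ≤ A * ρ^(n+1) := by
        rcases max_cases (A * ρ^n) |ψ τ| with ⟨hm, _⟩ | ⟨hm, _⟩
        · rw [hm] at hSb
          calc |ψ τ| ≤ ρ*(A*ρ^n) := hSb
          _ = A * ρ^(n+1) := by ring
        · rw [hm] at hSb
          have hS0 : (0:ℝ) ≤ |ψ τ| := abs_nonneg _
          have hzero : |ψ τ| ≤ 0 := by
            by_contra hpos'
            push_neg at hpos'
            have h7 := mul_lt_mul_of_pos_right hρ1 hpos'
            rw [one_mul] at h7
            linarith
          have : |ψ τ| = 0 := le_antisymm hzero hS0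
          rw [this]
          positivity
      intro t h1 h2
      have hin : t ∈ Icc ((n:ℝ)*q) ((n:ℝ)*q + q) := by
        constructor
        · push_cast at h1; linarith
        · push_cast at h2; linarith
      calc |ψ t| ≤ |ψ τ| := isMaxOn_iff.1 hτmax t hin
      _ ≤ A * ρ^(n+1) := hSfin
  -- decay estimate on [0, ∞)
  have hdecay : ∀ t : ℝ, 0 ≤ t → |ψ t| ≤ A * Real.exp ((Real.log ρ / q) * t) := by
    intro t ht
    have hn := Nat.le_ceil (t/q)
    set n := ⌈t/q⌉₊ with hndef
    have h2 : t ≤ (n:ℝ)*q := by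
      rw [div_le_iff₀ hqpos] at hn; exact hn
    have h1 : (n:ℝ)*q - q ≤ t := by
      have h4 := Nat.ceil_lt_add_one (div_nonneg ht hqpos.le)
      have h3 : (n:ℝ)*q < (t/q+1)*q := by
        apply mul_lt_mul_of_pos_right _ hqpos
        exact_mod_cast h4
      rw [add_mul, div_mul_cancel₀ _ hqpos.ne', one_mul] at h3
      linarith
    have hb := hbound n t h1 h2
    have hexp : ρ^n = Real.exp ((n:ℝ) * Real.log ρ) := by
      rw [Real.exp_nat_mul, Real.exp_log hρpos]
    have hmono : (n:ℝ) * Real.log ρ ≤ (t/q) * Real.log ρ :=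
      mul_le_mul_of_nonpos_right hn hlogneg.le
    calc |ψ t| ≤ A * ρ^n := hb
    _ = A * Real.exp ((n:ℝ)*Real.log ρ) := by rw [hexp]
    _ ≤ A * Real.exp ((t/q)*Real.log ρ) :=
        mul_le_mul_of_nonneg_left (Real.exp_le_exp.2 hmono) hA0.le
    _ = A * Real.exp ((Real.log ρ / q) * t) := by
        congr 1
        congr 1
        ring
  -- final assembly
  refine ⟨hnegall, min (-(Real.log ρ)/q) μ₁, ?_, ?_, ?_⟩
  · apply lt_min _ hord3
    exact div_pos (neg_pos.2 hlogneg) hqpos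
  · rw [Asymptotics.isBigO_iff]
    refine ⟨A, ?_⟩
    filter_upwards [Filter.eventually_ge_atTop (0:ℝ)] with t ht
    rw [Real.norm_eq_abs, Real.norm_eq_abs, Real.abs_exp]
    calc |ψ t| ≤ A * Real.exp ((Real.log ρ/q)*t) := hdecay t ht
    _ ≤ A * Real.exp (-(min (-(Real.log ρ)/q) μ₁ * t)) := by
        apply mul_le_mul_of_nonneg_left (Real.exp_le_exp.2 ?_) hA0.le
        have h5 : min (-(Real.log ρ)/q) μ₁ ≤ -(Real.log ρ)/q := min_le_left _ _
        have h6 := mul_le_mul_of_nonneg_right h5 ht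
        have h7 : (-(Real.log ρ)/q)*t = -((Real.log ρ/q)*t) := by ring
        linarith [h6, h7]
  · rw [Asymptotics.isBigO_iff]
    refine ⟨A, ?_⟩
    filter_upwards [Filter.eventually_lt_atBot (0:ℝ)] with t ht
    rw [hψneg t ht, Real.norm_eq_abs, Real.norm_eq_abs, abs_mul, abs_neg,
      abs_of_pos hA0, Real.abs_exp, Real.abs_exp]
    apply mul_le_mul_of_nonneg_left (Real.exp_le_exp.2 ?_) hA0.le
    have h5 : min (-(Real.log ρ)/q) μ₁ ≤ μ₁ := min_le_right _ _
    exact mul_le_mul_of_nonpos_right h5 ht.le
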